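/- arXiv:2006.01020 — 2 statements merged into one kernel-verified Lean document; each statement's English description precedes it below -/
import Mathlib

section
/- If T_1 and T_2 are trees, then the scramble number of the Cartesian product T_1 □ T_2 equals min{|V(T_1)|, |V(T_2)|}. -/
/-- A finite multigraph on vertex set `V`: `mul u v` is the number of
parallel edges between `u` and `v`; there are no loops. -/
structure Multigraph (V : Type) where
  mul : V → V → ℕ
  symm : ∀ u v, mul u v = mul v u
  loopless : ∀ v, mul v v = 0

namespace Multigraph

variable {V : Type}

/-- Adjacency in a multigraph. -/
def Adj (G : Multigraph V) (u v : V) : Prop := 0 < G.mul u v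

/-- The underlying simple graph of a multigraph. -/
def simple (G : Multigraph V) : SimpleGraph V where
  Adj u v := 0 < G.mul u v
  symm := ⟨fun u v h => by simpa [G.symm u v] using h⟩
  loopless := ⟨fun v h => by simp [G.loopless] at h⟩

/-- A multigraph is connected if its underlying simple graph is. -/
def Connected (G : Multigraph V) : Prop := G.simple.Connected

/-- A (nonempty) connected subset of the vertices of a multigraph. -/
def ConnSubset (G : Multigraph V) (B : Finset V) : Prop :=
  B.Nonempty ∧ (SimpleGraph.induce (B : Set V) G.simple).Connected

variable [Fintype V] [DecidableEq V]

/-- The number of edges between `A` and its complement. -/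
def cut (G : Multigraph V) (A : Finset V) : ℕ :=
  ∑ u ∈ A, ∑ v ∈ Aᶜ, G.mul u v

/-- A scramble: a collection of eggs, each a nonempty connected vertex subset. -/
def IsScramble (G : Multigraph V) (S : Finset (Finset V)) : Prop :=
  ∀ E ∈ S, G.ConnSubset E

/-- A hitting set for a scramble: a set of vertices meeting every egg. -/
def IsHitting (S : Finset (Finset V)) (C : Finset V) : Prop :=
  ∀ E ∈ S, (E ∩ C).Nonempty

/-- `k` is a valid order for the scramble `S` if no hitting set has fewer than `k`
vertices, and every vertex set `A` containing an egg, with an egg in its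
complement, has at least `k` crossing edges. -/
def ValidOrder (G : Multigraph V) (S : Finset (Finset V)) (k : ℕ) : Prop :=
  (∀ C : Finset V, IsHitting S C → k ≤ C.card) ∧
  (∀ A : Finset V, (∃ E ∈ S, E ⊆ A) → (∃ E' ∈ S, E' ⊆ Aᶜ) → k ≤ G.cut A)

/-- The scramble order `‖S‖`: the largest valid order. -/
noncomputable def scrambleOrder (G : Multigraph V) (S : Finset (Finset V)) : ℕ :=
  sSup {k | ValidOrder G S k}

/-- The scramble number of a multigraph: the maximum scramble order of a scramble. -/
noncomputable def scrambleNumber (G : Multigraph V) : ℕ :=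
  sSup {n | ∃ S, IsScramble G S ∧ scrambleOrder G S = n}

end Multigraph

namespace Multigraph

variable {V : Type}

/-- A multigraph is simple if there are no parallel edges. -/
def IsSimple (G : Multigraph V) : Prop := ∀ u v, G.mul u v ≤ 1

/-- A multigraph is a tree if it is simple and its underlying simple graph is a
tree (connected with no cycles). -/
def IsTreeM (G : Multigraph V) : Prop := IsSimple G ∧ G.simple.IsTree

variable [Fintype V]

/-- The degree of a vertex, counting edge multiplicities. -/
def degree (G : Multigraph V) (v : V) : ℕ := ∑ u, G.mul v u

/-- A multigraph is a cycle if it is connected and every vertex has degree 2. -/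
def IsCycleM (G : Multigraph V) : Prop := G.Connected ∧ ∀ v, G.degree v = 2

end Multigraph

namespace Multigraph

/-- The Cartesian product of two multigraphs. -/
def boxProd {V₁ V₂ : Type} [DecidableEq V₁] [DecidableEq V₂]
    (G₁ : Multigraph V₁) (G₂ : Multigraph V₂) : Multigraph (V₁ × V₂) where
  mul p q := (if p.1 = q.1 then G₂.mul p.2 q.2 else 0) +
             (if p.2 = q.2 then G₁.mul p.1 q.1 else 0)
  symm := fun p q => by
    show (if p.1 = q.1 then G₂.mul p.2 q.2 else 0) + (if p.2 = q.2 then G₁.mul p.1 q.1 else 0)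
       = (if q.1 = p.1 then G₂.mul q.2 p.2 else 0) + (if q.2 = p.2 then G₁.mul q.1 p.1 else 0)
    rw [G₁.symm p.1 q.1, G₂.symm p.2 q.2]
    congr 1 <;> simp [eq_comm]
  loopless := by intro p; simp [G₁.loopless, G₂.loopless]

end Multigraph



open SimpleGraph

/-- Along a walk from a vertex satisfying `P` to one not satisfying `P`,
there is an adjacent crossing pair, with both endpoints on the walk. -/
lemma crossing_of_walk {V : Type} {G : SimpleGraph V} (P : V → Prop) {u v : V}
    (p : G.Walk u v) (hu : P u) (hv : ¬ P v) :
    ∃ a b, G.Adj a b ∧ P a ∧ ¬ P b ∧ a ∈ p.support ∧ b ∈ p.support := by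
  induction p with
  | nil => exact absurd hu hv
  | @cons u m w h q ih =>
    by_cases hm : P m
    · obtain ⟨a, b, hab, ha, hb, has, hbs⟩ := ih hm hv
      exact ⟨a, b, hab, ha, hb, by simp [Walk.support_cons, has],
        by simp [Walk.support_cons, hbs]⟩
    · exact ⟨u, m, h, hu, hm, by simp, by simp [Walk.support_cons]⟩

section Delete

variable {V : Type} {T : SimpleGraph V} {a b : V}

lemma del_adj {x y : V} (hxy : T.Adj x y) (hne : s(x, y) ≠ s(a, b)) :
    (T \ fromEdgeSet {s(a, b)}).Adj x y := by
  rw [sdiff_adj, fromEdgeSet_adj]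
  exact ⟨hxy, fun hc => hne hc.1⟩

lemma reach_step {x y : V} (hr : (T \ fromEdgeSet {s(a, b)}).Reachable a x)
    (hxy : T.Adj x y) (hne : s(x, y) ≠ s(a, b)) :
    (T \ fromEdgeSet {s(a, b)}).Reachable a y :=
  hr.trans (del_adj hxy hne).reachable

/-- After deleting an edge, every vertex is reachable from one of its endpoints. -/
lemma cover_of_del (hT : T.Connected) (hab : T.Adj a b) (x : V) :
    (T \ fromEdgeSet {s(a, b)}).Reachable a x ∨ (T \ fromEdgeSet {s(a, b)}).Reachable b x := by
  have key : ∀ (u y : V), ((T \ fromEdgeSet {s(a, b)}).Reachable a u ∨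
      (T \ fromEdgeSet {s(a, b)}).Reachable b u) → T.Walk u y →
      ((T \ fromEdgeSet {s(a, b)}).Reachable a y ∨ (T \ fromEdgeSet {s(a, b)}).Reachable b y) := by
    intro u y hu p
    induction p with
    | nil => exact hu
    | @cons u m w h q ih =>
      apply ih
      by_cases he : s(u, m) = s(a, b)
      · rcases Sym2.eq_iff.mp he with ⟨rfl, rfl⟩ | ⟨rfl, rfl⟩
        · exact Or.inr (Reachable.refl _)
        · exact Or.inl (Reachable.refl _)
      · rcases hu with h1 | h1
        · exact Or.inl (h1.trans (del_adj h he).reachable)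
        · refine Or.inr (h1.trans (del_adj h ?_).reachable)
          · intro hc
            exact he hc
  exact key a x (Or.inl (Reachable.refl _)) (hT.preconnected a x).some

/-- The only crossing edge of the two sides of a deleted bridge is the bridge itself. -/
lemma only_cross (hbr : ¬ (T \ fromEdgeSet {s(a, b)}).Reachable a b)
    {x y : V} (hx : (T \ fromEdgeSet {s(a, b)}).Reachable a x) (hxy : T.Adj x y)
    (hy : ¬ (T \ fromEdgeSet {s(a, b)}).Reachable a y) : x = a ∧ y = b := by
  by_cases he : s(x, y) = s(a, b)
  · rcases Sym2.eq_iff.mp he with ⟨rfl, rfl⟩ | ⟨rfl, rfl⟩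
    · exact ⟨rfl, rfl⟩
    · exact absurd hx hbr
  · exact absurd (reach_step hx hxy he) hy

/-- For `u ≠ v` in a connected graph there is a neighbor `a` of `v` with `u`
reachable from `a` after deleting the edge `av`. -/
lemma neighbor_toward (hT : T.Connected) {u v : V} (huv : u ≠ v) :
    ∃ a, T.Adj a v ∧ (T \ fromEdgeSet {s(a, v)}).Reachable a u := by
  have key : ∀ (w z : V) (p : T.Walk w z), w ≠ z →
      ∃ a, T.Adj a z ∧ (T \ fromEdgeSet {s(a, z)}).Reachable a w := by
    intro w z p
    induction p with
    | nil => exact fun hw => absurd rfl hw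
    | @cons w m z h q ih =>
      intro hw
      by_cases hm : m = z
      · subst hm
        exact ⟨w, h, Reachable.refl _⟩
      · obtain ⟨a, ha, hr⟩ := ih hm
        refine ⟨a, ha, hr.trans (del_adj (T.adj_symm h) ?_).reachable⟩
        intro hc
        rcases Sym2.eq_iff.mp hc with ⟨rfl, rfl⟩ | ⟨rfl, rfl⟩
        · exact hw rfl
        · exact hm rfl
  exact key u v (hT.preconnected u v).some huv
namespace MGAux

open SimpleGraph Multigraph Finset

lemma simple_adj {V : Type} (G : Multigraph V) (u v : V) :
    G.simple.Adj u v ↔ 0 < G.mul u v := Iff.rfl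

lemma boxProd_mul {V₁ V₂ : Type} [DecidableEq V₁] [DecidableEq V₂]
    (T₁ : Multigraph V₁) (T₂ : Multigraph V₂) (p q : V₁ × V₂) :
    (boxProd T₁ T₂).mul p q = (if p.1 = q.1 then T₂.mul p.2 q.2 else 0) +
      (if p.2 = q.2 then T₁.mul p.1 q.1 else 0) := rfl

lemma boxProd_adj {V₁ V₂ : Type} [DecidableEq V₁] [DecidableEq V₂]
    (T₁ : Multigraph V₁) (T₂ : Multigraph V₂) (p q : V₁ × V₂) :
    (boxProd T₁ T₂).simple.Adj p q ↔
      (p.1 = q.1 ∧ T₂.simple.Adj p.2 q.2) ∨ (p.2 = q.2 ∧ T₁.simple.Adj p.1 q.1) := by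
  rw [simple_adj, boxProd_mul, simple_adj, simple_adj]
  by_cases h1 : p.1 = q.1 <;> by_cases h2 : p.2 = q.2 <;>
    simp [h1, h2, T₁.loopless, T₂.loopless]

/-- A walk in the product projects to a walk in the first factor whose support is
covered by first coordinates of the walk's support. -/
lemma proj_walk {V₁ V₂ : Type} [DecidableEq V₁] [DecidableEq V₂]
    {T₁ : Multigraph V₁} {T₂ : Multigraph V₂} {x y : V₁ × V₂}
    (p : (boxProd T₁ T₂).simple.Walk x y) :
    ∃ w : T₁.simple.Walk x.1 y.1, ∀ z ∈ w.support, ∃ c, (z, c) ∈ p.support := by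
  induction p with
  | nil =>
    rename_i s
    refine ⟨Walk.nil, ?_⟩
    intro z hz
    simp only [Walk.support_nil, List.mem_singleton] at hz
    subst hz
    exact ⟨s.2, by simp [Walk.support_nil, Prod.mk.eta]⟩
  | @cons u m v h q ih =>
    obtain ⟨w, hw⟩ := ih
    rcases (boxProd_adj T₁ T₂ u m).mp h with ⟨h1, _⟩ | ⟨_, h2⟩
    · refine ⟨w.copy h1.symm rfl, ?_⟩
      intro z hz
      rw [Walk.support_copy] at hz
      obtain ⟨c, hc⟩ := hw z hz
      exact ⟨c, by simp [Walk.support_cons, hc]⟩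
    · refine ⟨Walk.cons h2 w, ?_⟩
      intro z hz
      rw [Walk.support_cons] at hz
      rcases List.mem_cons.mp hz with rfl | hz
      · exact ⟨u.2, by simp [Walk.support_cons, Prod.mk.eta]⟩
      · obtain ⟨c, hc⟩ := hw z hz
        exact ⟨c, by simp [Walk.support_cons, hc]⟩

/-- A walk in an induced subgraph gives an ambient walk with support in the set. -/
lemma induced_walk {V : Type} {G : SimpleGraph V} {s : Set V} {u v : ↥s}
    (q : (SimpleGraph.induce s G).Walk u v) :
    ∃ p : G.Walk ↑u ↑v, ∀ z ∈ p.support, z ∈ s := by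
  induction q with
  | nil =>
    rename_i t
    refine ⟨Walk.nil, ?_⟩
    intro z hz
    simp only [Walk.support_nil, List.mem_singleton] at hz
    subst hz
    exact t.2
  | @cons a b c h q ih =>
    obtain ⟨p, hp⟩ := ih
    refine ⟨Walk.cons (show G.Adj ↑a ↑b from h) p, ?_⟩
    intro z hz
    rw [Walk.support_cons] at hz
    rcases List.mem_cons.mp hz with rfl | hz
    · exact a.2
    · exact hp z hz

/-- Two points of a connected subset are joined by a walk supported in the set. -/
lemma connSubset_walk {V : Type} [DecidableEq V] {G : Multigraph V} {E : Finset V}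
    (hE : G.ConnSubset E) {x y : V} (hx : x ∈ E) (hy : y ∈ E) :
    ∃ p : G.simple.Walk x y, ∀ z ∈ p.support, z ∈ E := by
  have hr := hE.2.preconnected ⟨x, by simpa using hx⟩ ⟨y, by simpa using hy⟩
  obtain ⟨p, hp⟩ := induced_walk hr.some
  exact ⟨p, fun z hz => by simpa using hp z hz⟩

end MGAux
namespace MGAux

open SimpleGraph Multigraph Finset

section Plumb

variable {V : Type} [Fintype V] [DecidableEq V] {G : Multigraph V}

lemma validOrder_le_card {S : Finset (Finset V)} (hS : G.IsScramble S)
    {k : ℕ} (h : G.ValidOrder S k) : k ≤ Fintype.card V := by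
  have := h.1 Finset.univ (fun E hE => by simpa using (hS E hE).1)
  simpa using this

lemma zero_valid (S : Finset (Finset V)) : G.ValidOrder S 0 :=
  ⟨fun _ _ => Nat.zero_le _, fun _ _ _ => Nat.zero_le _⟩

lemma scrambleOrder_le {S : Finset (Finset V)} {m : ℕ}
    (h : ∀ k, G.ValidOrder S k → k ≤ m) : G.scrambleOrder S ≤ m :=
  csSup_le ⟨0, zero_valid S⟩ h

lemma le_scrambleOrder {S : Finset (Finset V)} (hS : G.IsScramble S)
    {k : ℕ} (h : G.ValidOrder S k) : k ≤ G.scrambleOrder S :=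
  le_csSup ⟨Fintype.card V, fun _ hn => validOrder_le_card hS hn⟩ h

lemma scrambleOrder_le_card {S : Finset (Finset V)} (hS : G.IsScramble S) :
    G.scrambleOrder S ≤ Fintype.card V :=
  scrambleOrder_le (fun _ hk => validOrder_le_card hS hk)

lemma le_scrambleNumber {S : Finset (Finset V)} (hS : G.IsScramble S) :
    G.scrambleOrder S ≤ G.scrambleNumber := by
  refine le_csSup ⟨Fintype.card V, ?_⟩ ⟨S, hS, rfl⟩
  rintro n ⟨S', hS', rfl⟩
  exact scrambleOrder_le_card hS'

lemma scrambleNumber_le {m : ℕ}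
    (h : ∀ S : Finset (Finset V), G.IsScramble S → G.scrambleOrder S ≤ m) :
    G.scrambleNumber ≤ m := by
  have hne : IsScramble G (∅ : Finset (Finset V)) := fun E hE => by simp at hE
  refine csSup_le ⟨G.scrambleOrder ∅, ∅, hne, rfl⟩ ?_
  rintro n ⟨S, hS, rfl⟩
  exact h S hS

end Plumb

section Cuts

variable {V₁ V₂ : Type} [Fintype V₁] [DecidableEq V₁] [Fintype V₂] [DecidableEq V₂]
  (T₁ : Multigraph V₁) (T₂ : Multigraph V₂)

/-- Upper bound on a cut all of whose crossing edges lie over the single edge `ab`. -/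
lemma cut_le_card₂ (hs : IsSimple T₁) (A : Finset (V₁ × V₂)) (a b : V₁)
    (hcross : ∀ p q : V₁ × V₂, p ∈ A → q ∉ A → 0 < T₁.mul p.1 q.1 → p.1 = a ∧ q.1 = b)
    (hvert : ∀ p q : V₁ × V₂, p ∈ A → q ∉ A → p.1 ≠ q.1) :
    (boxProd T₁ T₂).cut A ≤ Fintype.card V₂ := by
  classical
  unfold Multigraph.cut
  rw [← Finset.sum_product']
  have hbound : ∀ x ∈ A ×ˢ Aᶜ, (boxProd T₁ T₂).mul x.1 x.2 ≤
      (if x.1.1 = a ∧ x.2.1 = b ∧ x.1.2 = x.2.2 then 1 else 0) := by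
    rintro ⟨p, q⟩ hx
    rw [Finset.mem_product] at hx
    have hp : p ∈ A := hx.1
    have hq : q ∉ A := by simpa using hx.2
    have hne : p.1 ≠ q.1 := hvert p q hp hq
    rw [boxProd_mul, if_neg hne]
    by_cases h2 : p.2 = q.2
    · rw [if_pos h2]
      simp only [zero_add]
      by_cases h0 : 0 < T₁.mul p.1 q.1
      · obtain ⟨ha, hb⟩ := hcross p q hp hq h0
        rw [if_pos ⟨ha, hb, h2⟩]
        exact hs p.1 q.1
      · push_neg at h0
        exact le_trans h0 (Nat.zero_le _)
    · rw [if_neg h2]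
      simp
  calc ∑ x ∈ A ×ˢ Aᶜ, (boxProd T₁ T₂).mul x.1 x.2
      ≤ ∑ x ∈ A ×ˢ Aᶜ, (if x.1.1 = a ∧ x.2.1 = b ∧ x.1.2 = x.2.2 then 1 else 0) :=
        Finset.sum_le_sum hbound
    _ = ((A ×ˢ Aᶜ).filter (fun x => x.1.1 = a ∧ x.2.1 = b ∧ x.1.2 = x.2.2)).card := by
        simp [Finset.sum_boole]
    _ ≤ Fintype.card V₂ := by
        rw [← Finset.card_univ]
        apply Finset.card_le_card_of_injOn (fun x => x.1.2) (fun _ _ => Finset.mem_univ _)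
        rintro ⟨p, q⟩ hx ⟨p', q'⟩ hy hxy
        simp only [Finset.mem_coe, Finset.mem_filter] at hx hy
        obtain ⟨-, ha, hb, h2⟩ := hx
        obtain ⟨-, ha', hb', h2'⟩ := hy
        simp only at hxy
        have : p = p' := Prod.ext (ha.trans ha'.symm) hxy
        refine Prod.ext this (Prod.ext (hb.trans hb'.symm) ?_)
        rw [← h2, ← h2', hxy]

/-- Lower bound on a cut which has a crossing edge in every row. -/
lemma card_le_cut (A : Finset (V₁ × V₂))
    (hA : ∀ w : V₂, ∃ u v : V₁, (u, w) ∈ A ∧ (v, w) ∉ A ∧ 0 < T₁.mul u v) :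
    Fintype.card V₂ ≤ (boxProd T₁ T₂).cut A := by
  classical
  have key : ∀ w : V₂, ∃ t : (V₁ × V₂) × (V₁ × V₂),
      t ∈ A ×ˢ Aᶜ ∧ 0 < (boxProd T₁ T₂).mul t.1 t.2 ∧ t.1.2 = w := by
    intro w
    obtain ⟨u, v, hu, hv, hm⟩ := hA w
    refine ⟨((u, w), (v, w)), ?_, ?_, rfl⟩
    · rw [Finset.mem_product]
      exact ⟨hu, by simpa using hv⟩
    · have hne : u ≠ v := by
        rintro rfl
        simp [T₁.loopless] at hm
      simpa [boxProd_mul, hne] using hm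
  choose g hg1 hg2 hg3 using key
  have hinj : Function.Injective g := by
    intro w w' h
    rw [← hg3 w, ← hg3 w', h]
  unfold Multigraph.cut
  rw [← Finset.sum_product']
  calc (Fintype.card V₂ : ℕ) = (Finset.univ.image g).card := by
        rw [Finset.card_image_of_injective _ hinj, Finset.card_univ]
    _ ≤ ∑ t ∈ Finset.univ.image g, (boxProd T₁ T₂).mul t.1 t.2 := by
        have := Finset.card_nsmul_le_sum (Finset.univ.image g)
          (fun t => (boxProd T₁ T₂).mul t.1 t.2) 1 ?_
        · simpa using this
        · intro t ht
          obtain ⟨w, -, rfl⟩ := Finset.mem_image.mp ht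
          exact hg2 w
    _ ≤ ∑ t ∈ A ×ˢ Aᶜ, (boxProd T₁ T₂).mul t.1 t.2 := by
        apply Finset.sum_le_sum_of_subset
        intro t ht
        obtain ⟨w, -, rfl⟩ := Finset.mem_image.mp ht
        exact hg1 w

end Cuts

end MGAux
namespace MGAux

open SimpleGraph Multigraph Finset

section Congr

variable {V V' : Type} [Fintype V] [DecidableEq V] [Fintype V'] [DecidableEq V']

lemma connSubset_image (e : V ≃ V') {G : Multigraph V} {G' : Multigraph V'}
    (h : ∀ x y, G'.mul (e x) (e y) = G.mul x y)
    {B : Finset V} (hB : G.ConnSubset B) : G'.ConnSubset (B.image e) := by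
  refine ⟨hB.1.image e, ?_⟩
  refine SimpleGraph.Connected.map
    (⟨fun x => ⟨e x.1, by
        simp only [Finset.coe_image, Set.mem_image, Finset.mem_coe]
        exact ⟨x.1, x.2, rfl⟩⟩, ?_⟩ :
      SimpleGraph.induce (↑B : Set V) G.simple →g
      SimpleGraph.induce (↑(B.image e) : Set V') G'.simple) ?_ hB.2
  · intro x y hxy
    show G'.simple.Adj (e x.1) (e y.1)
    rw [simple_adj, h]
    exact hxy
  · rintro ⟨y, hy⟩
    simp only [Finset.coe_image, Set.mem_image, Finset.mem_coe] at hy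
    obtain ⟨x, hx, rfl⟩ := hy
    exact ⟨⟨x, hx⟩, rfl⟩

lemma image_compl (e : V ≃ V') (A : Finset V) :
    (A.image e)ᶜ = Aᶜ.image e := by
  ext x
  obtain ⟨y, rfl⟩ := e.surjective x
  constructor
  · intro hx
    rw [Finset.mem_compl] at hx
    refine Finset.mem_image.mpr ⟨y, Finset.mem_compl.mpr ?_, rfl⟩
    intro hy
    exact hx (Finset.mem_image_of_mem _ hy)
  · intro hx
    obtain ⟨z, hz, hze⟩ := Finset.mem_image.mp hx
    have : z = y := e.injective hze
    subst this
    rw [Finset.mem_compl] at hz ⊢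
    intro hc
    obtain ⟨u, hu, hue⟩ := Finset.mem_image.mp hc
    exact hz (by rwa [e.injective hue] at hu)

lemma cut_image (e : V ≃ V') {G : Multigraph V} {G' : Multigraph V'}
    (h : ∀ x y, G'.mul (e x) (e y) = G.mul x y) (A : Finset V) :
    G'.cut (A.image e) = G.cut A := by
  unfold Multigraph.cut
  rw [image_compl e A,
    Finset.sum_image (fun x _ y _ hxy => e.injective hxy)]
  refine Finset.sum_congr rfl (fun x _ => ?_)
  rw [Finset.sum_image (fun u _ v _ huv => e.injective huv)]
  exact Finset.sum_congr rfl (fun y _ => h x y)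

lemma scrambleNumber_le_congr (e : V ≃ V') {G : Multigraph V} {G' : Multigraph V'}
    (h : ∀ x y, G'.mul (e x) (e y) = G.mul x y) :
    G.scrambleNumber ≤ G'.scrambleNumber := by
  apply scrambleNumber_le
  intro S hS
  have hS' : G'.IsScramble (S.image (Finset.image e)) := by
    intro E' hE'
    obtain ⟨E, hE, rfl⟩ := Finset.mem_image.mp hE'
    exact connSubset_image e h (hS E hE)
  refine le_trans (scrambleOrder_le ?_) (le_scrambleNumber hS')
  intro k hk
  apply le_scrambleOrder hS'
  constructor
  · intro C' hC'
    have hC : IsHitting S (C'.image e.symm) := by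
      intro E hE
      obtain ⟨x, hx⟩ := hC' (E.image e) (Finset.mem_image_of_mem _ hE)
      rw [Finset.mem_inter] at hx
      obtain ⟨y, hy, rfl⟩ := Finset.mem_image.mp hx.1
      refine ⟨y, Finset.mem_inter.mpr ⟨hy, ?_⟩⟩
      exact Finset.mem_image.mpr ⟨e y, hx.2, by simp⟩
    calc k ≤ (C'.image e.symm).card := hk.1 _ hC
      _ ≤ C'.card := Finset.card_image_le
  · rintro A' ⟨E1', hE1', hsub1⟩ ⟨E2', hE2', hsub2⟩
    obtain ⟨E1, hE1, rfl⟩ := Finset.mem_image.mp hE1'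
    obtain ⟨E2, hE2, rfl⟩ := Finset.mem_image.mp hE2'
    set A := A'.image e.symm with hA
    have hsub1' : E1 ⊆ A := by
      intro x hx
      exact Finset.mem_image.mpr ⟨e x, hsub1 (Finset.mem_image_of_mem _ hx), by simp⟩
    have hsub2' : E2 ⊆ Aᶜ := by
      intro x hx
      rw [Finset.mem_compl]
      intro hxA
      obtain ⟨y, hy, hxy⟩ := Finset.mem_image.mp hxA
      have h2 : e x ∈ A'ᶜ := hsub2 (Finset.mem_image_of_mem _ hx)
      rw [Finset.mem_compl] at h2
      apply h2
      have h3 : y = e x := by rw [← hxy]; simp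
      rwa [← h3]
    have hAA : A.image e = A' := by
      rw [hA, Finset.image_image]
      simp
    calc k ≤ G.cut A := hk.2 A ⟨E1, hE1, hsub1'⟩ ⟨E2, hE2, hsub2'⟩
      _ = G'.cut (A.image e) := (cut_image e h A).symm
      _ = G'.cut A' := by rw [hAA]

end Congr

end MGAux
namespace MGAux

open SimpleGraph Multigraph Finset

section Lower

variable {V₁ V₂ : Type} [Fintype V₁] [DecidableEq V₁] [Fintype V₂] [DecidableEq V₂]
  (T₁ : Multigraph V₁) (T₂ : Multigraph V₂)

/-- The column of `v`. -/
def col (v : V₁) : Finset (V₁ × V₂) := Finset.univ.image (fun w => (v, w))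

lemma mem_col {v : V₁} {p : V₁ × V₂} : p ∈ col (V₂ := V₂) v ↔ p.1 = v := by
  constructor
  · rintro hp
    obtain ⟨w, -, rfl⟩ := Finset.mem_image.mp hp
    rfl
  · intro hp
    exact Finset.mem_image.mpr ⟨p.2, Finset.mem_univ _, by rw [← hp]⟩

lemma col_connSubset (h₂ : T₂.Connected) (v : V₁) :
    (boxProd T₁ T₂).ConnSubset (col v) := by
  have hne : Nonempty V₂ := h₂.nonempty
  obtain ⟨w0⟩ := hne
  refine ⟨⟨(v, w0), mem_col.mpr rfl⟩, ?_⟩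
  refine SimpleGraph.Connected.map
    (⟨fun w => ⟨(v, w), Finset.mem_coe.mpr (mem_col.mpr rfl)⟩, ?_⟩ :
      T₂.simple →g SimpleGraph.induce (↑(col (V₂ := V₂) v) : Set (V₁ × V₂))
        (boxProd T₁ T₂).simple) ?_ h₂
  · intro w w' hww
    show (boxProd T₁ T₂).simple.Adj (v, w) (v, w')
    exact (boxProd_adj T₁ T₂ _ _).mpr (Or.inl ⟨rfl, hww⟩)
  · rintro ⟨p, hp⟩
    rw [Finset.mem_coe, mem_col] at hp
    refine ⟨p.2, Subtype.ext ?_⟩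
    show (v, p.2) = p
    rw [← hp]

lemma lower_bound (h₁ : IsTreeM T₁) (h₂ : IsTreeM T₂) :
    min (Fintype.card V₁) (Fintype.card V₂) ≤ (boxProd T₁ T₂).scrambleNumber := by
  classical
  set S : Finset (Finset (V₁ × V₂)) := Finset.univ.image (fun v : V₁ => col (V₂ := V₂) v)
    with hSdef
  have hS : (boxProd T₁ T₂).IsScramble S := by
    intro E hE
    obtain ⟨v, -, rfl⟩ := Finset.mem_image.mp hE
    exact col_connSubset T₁ T₂ h₂.2.isConnected v
  have hvalid : (boxProd T₁ T₂).ValidOrder S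
      (min (Fintype.card V₁) (Fintype.card V₂)) := by
    constructor
    · intro C hC
      refine le_trans (min_le_left _ _) ?_
      have key : ∀ v : V₁, ∃ p : V₁ × V₂, p ∈ C ∧ p.1 = v := by
        intro v
        obtain ⟨p, hp⟩ := hC (col v) (Finset.mem_image.mpr ⟨v, Finset.mem_univ _, rfl⟩)
        rw [Finset.mem_inter] at hp
        exact ⟨p, hp.2, mem_col.mp hp.1⟩
      choose g hg1 hg2 using key
      rw [← Finset.card_univ]
      apply Finset.card_le_card_of_injOn g (fun v _ => hg1 v)
      intro v _ v' _ hvv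
      rw [← hg2 v, ← hg2 v', hvv]
    · rintro A ⟨E, hE, hEA⟩ ⟨E', hE', hE'A⟩
      refine le_trans (min_le_right _ _) ?_
      obtain ⟨u, -, rfl⟩ := Finset.mem_image.mp hE
      obtain ⟨u', -, rfl⟩ := Finset.mem_image.mp hE'
      apply card_le_cut
      intro w
      have hu : (u, w) ∈ A := hEA ((mem_col (p := (u, w))).mpr rfl)
      have hu' : (u', w) ∉ A := by
        have := hE'A ((mem_col (p := (u', w))).mpr rfl)
        rwa [Finset.mem_compl] at this
      obtain ⟨a, b, hab, ha, hb, -, -⟩ :=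
        crossing_of_walk (fun x => (x, w) ∈ A)
          (h₁.2.isConnected.preconnected u u').some hu hu'
      exact ⟨a, b, ha, hb, hab⟩
  exact le_trans (le_scrambleOrder hS hvalid) (le_scrambleNumber hS)

end Lower

end MGAux
namespace MGAux

open SimpleGraph Multigraph Finset

section Upper

variable {V₁ V₂ : Type} [Fintype V₁] [DecidableEq V₁] [Fintype V₂] [DecidableEq V₂]
  (T₁ : Multigraph V₁) (T₂ : Multigraph V₂)

lemma upper_bound (h₁ : IsTreeM T₁) :
    (boxProd T₁ T₂).scrambleNumber ≤ Fintype.card V₂ := by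
  classical
  have hconn : T₁.simple.Connected := h₁.2.isConnected
  have hbr : ∀ {a b : V₁}, T₁.simple.Adj a b →
      ¬ (T₁.simple \ fromEdgeSet {s(a, b)}).Reachable a b := by
    intro a b hab
    exact isBridge_iff.mp ((isAcyclic_iff_forall_adj_isBridge.mp h₁.2.2) hab)
  apply scrambleNumber_le
  intro S hS
  apply scrambleOrder_le
  intro k hk
  by_cases hcase : ∃ a b, T₁.simple.Adj a b ∧
      (∃ E ∈ S, ∀ p ∈ E, (T₁.simple \ fromEdgeSet {s(a, b)}).Reachable a p.1) ∧
      (∃ E' ∈ S, ∀ p ∈ E', ¬ (T₁.simple \ fromEdgeSet {s(a, b)}).Reachable a p.1)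
  · -- Case 1: some tree edge separates two eggs: small cut.
    obtain ⟨a, b, hab, ⟨E, hE, hEside⟩, ⟨E', hE', hE'side⟩⟩ := hcase
    set A : Finset (V₁ × V₂) :=
      Finset.univ.filter (fun p => (T₁.simple \ fromEdgeSet {s(a, b)}).Reachable a p.1) with hA
    have hEA : E ⊆ A := fun p hp => Finset.mem_filter.mpr ⟨Finset.mem_univ _, hEside p hp⟩
    have hE'A : E' ⊆ Aᶜ := by
      intro p hp
      refine Finset.mem_compl.mpr ?_
      intro hc
      exact hE'side p hp (Finset.mem_filter.mp hc).2
    refine le_trans (hk.2 A ⟨E, hE, hEA⟩ ⟨E', hE', hE'A⟩) ?_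
    apply cut_le_card₂ T₁ T₂ h₁.1 A a b
    · intro p q hp hq hm
      have hpa := (Finset.mem_filter.mp hp).2
      have hqa : ¬ (T₁.simple \ fromEdgeSet {s(a, b)}).Reachable a q.1 :=
        fun hc => hq (Finset.mem_filter.mpr ⟨Finset.mem_univ _, hc⟩)
      exact only_cross (hbr hab) hpa ((simple_adj T₁ _ _).mpr hm) hqa
    · intro p q hp hq h1
      have hpa := (Finset.mem_filter.mp hp).2
      exact hq (Finset.mem_filter.mpr ⟨Finset.mem_univ _, h1 ▸ hpa⟩)
  · -- Case 2: no tree edge separates eggs: find a hitting column.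
    have orient : ∀ a b, T₁.simple.Adj a b →
        (∀ E ∈ S, ∃ p ∈ E, (T₁.simple \ fromEdgeSet {s(a, b)}).Reachable b p.1) ∨
        (∀ E ∈ S, ∃ p ∈ E, (T₁.simple \ fromEdgeSet {s(a, b)}).Reachable a p.1) := by
      intro a b hab
      by_contra hcon
      push_neg at hcon
      obtain ⟨⟨E1, hE1, hE1b⟩, ⟨E2, hE2, hE2a⟩⟩ := hcon
      exact hcase ⟨a, b, hab,
        ⟨E1, hE1, fun p hp => (cover_of_del hconn hab p.1).resolve_right (hE1b p hp)⟩,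
        ⟨E2, hE2, hE2a⟩⟩
    have good : ∃ v : V₁, ∀ a, T₁.simple.Adj a v →
        ∀ E ∈ S, ∃ p ∈ E, (T₁.simple \ fromEdgeSet {s(a, v)}).Reachable v p.1 := by
      by_contra hcon
      push_neg at hcon
      choose f hf1 hf2 using hcon
      have hQ : ∀ v, ∀ E ∈ S, ∃ p ∈ E,
          (T₁.simple \ fromEdgeSet {s(f v, v)}).Reachable (f v) p.1 := by
        intro v
        rcases orient (f v) v (hf1 v) with h | h
        · exfalso
          obtain ⟨E, hE, hneg⟩ := hf2 v
          obtain ⟨p, hp, hr⟩ := h E hE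
          exact hneg p hp hr
        · exact h
      have hinj : Function.Injective (fun v => s(v, f v)) := by
        intro v w hvw
        by_contra hne
        simp only at hvw
        rcases Sym2.eq_iff.mp hvw with ⟨h1, h2⟩ | ⟨h1, h2⟩
        · exact hne h1
        · -- v = f w, f v = w : contradiction with hcase on edge (w, v)
          apply hcase
          have hDeq : (T₁.simple \ fromEdgeSet {s(f v, v)}) =
              (T₁.simple \ fromEdgeSet {s(w, v)}) := by rw [h2]
          have hDeq' : (T₁.simple \ fromEdgeSet {s(f w, w)}) =
              (T₁.simple \ fromEdgeSet {s(w, v)}) := by rw [← h1, Sym2.eq_swap]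
          have hadj : T₁.simple.Adj w v := h2 ▸ hf1 v
          obtain ⟨E, hE, hEneg⟩ := hf2 v
          obtain ⟨E', hE', hE'neg⟩ := hf2 w
          refine ⟨w, v, hadj, ⟨E, hE, ?_⟩, ⟨E', hE', ?_⟩⟩
          · intro p hp
            refine (cover_of_del hconn hadj p.1).resolve_right ?_
            intro hc
            exact hEneg p hp (hDeq ▸ hc)
          · intro p hp
            intro hc
            -- hc : Reachable w p.1 in del s(w,v); hE'neg: ¬ Reachable w p.1 in del s(f w, w)
            exact hE'neg p hp (hDeq' ▸ hc)
      have hmem : ∀ v : V₁, s(v, f v) ∈ T₁.simple.edgeFinset := by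
        intro v
        rw [SimpleGraph.mem_edgeFinset, SimpleGraph.mem_edgeSet]
        exact (hf1 v).symm
      have hcard : Fintype.card V₁ ≤ T₁.simple.edgeFinset.card := by
        rw [← Finset.card_univ]
        exact Finset.card_le_card_of_injOn _ (fun v _ => hmem v)
          (Function.Injective.injOn hinj)
      have := h₁.2.card_edgeFinset
      omega
    obtain ⟨v, hgood⟩ := good
    have hhit : IsHitting S (col (V₂ := V₂) v) := by
      intro E hE
      by_contra hcon2
      rw [Finset.not_nonempty_iff_eq_empty] at hcon2
      have hv : ∀ p ∈ E, p.1 ≠ v := by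
        intro p hp hpv
        have : p ∈ E ∩ col v := Finset.mem_inter.mpr ⟨hp, mem_col.mpr hpv⟩
        simp [hcon2] at this
      obtain ⟨p0, hp0⟩ := (hS E hE).1
      obtain ⟨a, hav, har⟩ := neighbor_toward hconn (hv p0 hp0)
      obtain ⟨q, hq, hqr⟩ := hgood a hav E hE
      obtain ⟨pw, hpw⟩ := connSubset_walk (hS E hE) hp0 hq
      obtain ⟨w1, hw1⟩ := proj_walk pw
      have hnq : ¬ (T₁.simple \ fromEdgeSet {s(a, v)}).Reachable a q.1 := by
        intro hc
        exact hbr hav (hc.trans hqr.symm)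
      obtain ⟨c, d, hcd, hc, hd, -, hds⟩ := crossing_of_walk
        (fun z => (T₁.simple \ fromEdgeSet {s(a, v)}).Reachable a z) w1 har hnq
      have hcd2 : c = a ∧ d = v := only_cross (hbr hav) hc hcd hd
      obtain ⟨c2, hc2⟩ := hw1 d hds
      exact hv (d, c2) (hpw _ hc2) hcd2.2
    calc k ≤ (col (V₂ := V₂) v).card := hk.1 _ hhit
      _ = Fintype.card V₂ := by
          rw [col, Finset.card_image_of_injective _ (fun w w' hww => (Prod.ext_iff.mp hww).2),
            Finset.card_univ]

end Upper

end MGAux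
open Multigraph in
/-- The scramble number of a Cartesian product of two trees is the minimum of
their numbers of vertices. -/
theorem scrambleNumber_boxProd_trees {V₁ V₂ : Type}
    [Fintype V₁] [DecidableEq V₁] [Fintype V₂] [DecidableEq V₂]
    (T₁ : Multigraph V₁) (T₂ : Multigraph V₂)
    (h₁ : IsTreeM T₁) (h₂ : IsTreeM T₂) :
    scrambleNumber (boxProd T₁ T₂) = min (Fintype.card V₁) (Fintype.card V₂) := by
  refine le_antisymm (le_min ?_ ?_) (MGAux.lower_bound T₁ T₂ h₁ h₂)
  · refine le_trans (MGAux.scrambleNumber_le_congr (Equiv.prodComm V₁ V₂)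
      (G := boxProd T₁ T₂) (G' := boxProd T₂ T₁) ?_) (MGAux.upper_bound T₂ T₁ h₂)
    intro x y
    show (boxProd T₂ T₁).mul (x.2, x.1) (y.2, y.1) = (boxProd T₁ T₂).mul x y
    rw [MGAux.boxProd_mul, MGAux.boxProd_mul]
    exact Nat.add_comm _ _
  · exact MGAux.upper_bound T₁ T₂ h₁
end Delete
end

section
/- Let G be a connected multigraph, S a scramble in G, and D an effective divisor of positive rank on G whose support meets the maximum number of eggs of S among all effective divisors equivalent to D. If the support of D meets every egg of S, or not, in either case deg(D) ≥ ||S||. -/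
namespace Multigraph

variable {V : Type} [Fintype V] [DecidableEq V]

/-- The degree of a divisor: the total number of chips. -/
def deg (D : V → ℤ) : ℤ := ∑ v, D v

/-- A divisor is effective if no vertex is in debt. -/
def Effective (D : V → ℤ) : Prop := ∀ v, 0 ≤ D v

/-- Chip-firing the vertex subset `A`: every vertex of `A` sends a chip along
each edge to the complement of `A`. -/
def fire (G : Multigraph V) (A : Finset V) (D : V → ℤ) : V → ℤ :=
  fun v => if v ∈ A then D v - ∑ u ∈ Aᶜ, (G.mul v u : ℤ)
           else D v + ∑ u ∈ A, (G.mul v u : ℤ)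

/-- Equivalence of divisors: generated by chip-firing vertex subsets. -/
def LinEq (G : Multigraph V) : (V → ℤ) → (V → ℤ) → Prop :=
  Relation.ReflTransGen (fun X Y => ∃ A : Finset V, Y = G.fire A X)

/-- A divisor has positive rank if for every vertex `v` there is an equivalent
effective divisor with a chip on `v`. -/
def PositiveRank (G : Multigraph V) (D : V → ℤ) : Prop :=
  ∀ v : V, ∃ D' : V → ℤ, LinEq G D D' ∧ Effective D' ∧ 1 ≤ D' v

/-- The gonality of a multigraph: the minimum degree of an effective divisor of
positive rank. -/
noncomputable def gonality (G : Multigraph V) : ℕ :=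
  sInf {n : ℕ | ∃ D : V → ℤ, Effective D ∧ PositiveRank G D ∧ deg D = (n : ℤ)}

end Multigraph

set_option linter.unusedSectionVars false
section Aux
namespace Multigraph
open Finset

variable {V : Type} [Fintype V] [DecidableEq V]

/-- The Laplacian of a potential. -/
def Lap (G : Multigraph V) (f : V → ℤ) : V → ℤ :=
  fun v => ∑ u, (G.mul v u : ℤ) * (f v - f u)

lemma lap_add (G : Multigraph V) (f g : V → ℤ) (v : V) :
    G.Lap (fun u => f u + g u) v = G.Lap f v + G.Lap g v := by
  simp only [Lap, ← Finset.sum_add_distrib]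
  exact Finset.sum_congr rfl (fun u _ => by ring)

lemma sum_lap (G : Multigraph V) (f : V → ℤ) : ∑ v, G.Lap f v = 0 := by
  have h1 : ∑ v, G.Lap f v
      = ∑ v, ∑ u, (G.mul v u : ℤ) * f v - ∑ v, ∑ u, (G.mul v u : ℤ) * f u := by
    simp only [Lap, mul_sub]
    rw [← Finset.sum_sub_distrib]
    exact Finset.sum_congr rfl fun v _ => by rw [← Finset.sum_sub_distrib]
  rw [h1, Finset.sum_comm (s := Finset.univ) (t := Finset.univ)
    (f := fun v u => (G.mul v u : ℤ) * f u)]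
  rw [sub_eq_zero]
  exact Finset.sum_congr rfl fun v _ => Finset.sum_congr rfl fun u _ => by rw [G.symm]

lemma sum_compl_eq (A : Finset V) (h : V → ℤ) :
    ∑ u ∈ Aᶜ, h u = ∑ u, if u ∈ A then 0 else h u := by
  rw [show (∑ u, if u ∈ A then (0:ℤ) else h u) = ∑ u, if u ∈ Aᶜ then h u else 0 from
    Finset.sum_congr rfl fun u _ => by by_cases hu : u ∈ A <;> simp [hu],
    Finset.sum_ite_mem, Finset.univ_inter]

lemma lap_ind_mem (G : Multigraph V) (A : Finset V) {v : V} (hv : v ∈ A) :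
    G.Lap (fun u => if u ∈ A then (1:ℤ) else 0) v = ∑ u ∈ Aᶜ, (G.mul v u : ℤ) := by
  simp only [Lap, hv, if_true]
  rw [sum_compl_eq]
  exact Finset.sum_congr rfl fun u _ => by by_cases hu : u ∈ A <;> simp [hu]

lemma lap_ind_not_mem (G : Multigraph V) (A : Finset V) {v : V} (hv : v ∉ A) :
    G.Lap (fun u => if u ∈ A then (1:ℤ) else 0) v = -∑ u ∈ A, (G.mul v u : ℤ) := by
  simp only [Lap, hv, if_false]
  rw [← Finset.sum_neg_distrib]
  rw [show (∑ u ∈ A, -(G.mul v u : ℤ)) = ∑ u, if u ∈ A then -(G.mul v u:ℤ) else 0 from by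
    rw [Finset.sum_ite_mem, Finset.univ_inter]]
  exact Finset.sum_congr rfl fun u _ => by by_cases hu : u ∈ A <;> simp [hu]

lemma fire_eq_sub_lap (G : Multigraph V) (A : Finset V) (X : V → ℤ) :
    G.fire A X = fun v => X v - G.Lap (fun u => if u ∈ A then (1:ℤ) else 0) v := by
  funext v
  by_cases hv : v ∈ A
  · rw [G.lap_ind_mem A hv]; simp [fire, hv]
  · rw [G.lap_ind_not_mem A hv]; simp [fire, hv, sub_neg_eq_add]

end Multigraph
end Aux
section Aux2
namespace Multigraph
open Finset

variable {V : Type} [Fintype V] [DecidableEq V]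

lemma linEq_sub_lap (G : Multigraph V) :
    ∀ (n : ℕ) (g : V → ℤ), (∀ v, 0 ≤ g v) → (∑ v, g v).toNat = n →
      ∀ X : V → ℤ, G.LinEq X (fun v => X v - G.Lap g v) := by
  intro n
  induction n using Nat.strong_induction_on with
  | _ n ih =>
    intro g hg hsum X
    by_cases h0 : ∀ v, g v = 0
    · have hL : ∀ v, G.Lap g v = 0 := by
        intro v; simp [Lap, h0]
      have : (fun v => X v - G.Lap g v) = X := by funext v; rw [hL]; ring
      rw [this]
      exact Relation.ReflTransGen.refl
    · push_neg at h0
      obtain ⟨v0, hv0⟩ := h0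
      set A := Finset.univ.filter (fun v => 1 ≤ g v) with hA
      set g' := fun v => g v - (if v ∈ A then (1:ℤ) else 0) with hg'def
      have hmemA : ∀ v, v ∈ A ↔ 1 ≤ g v := by
        intro v; simp [hA]
      have hg' : ∀ v, 0 ≤ g' v := by
        intro v; by_cases hv : v ∈ A
        · have := (hmemA v).mp hv; simp [hg'def, hv]; omega
        · have : ¬ 1 ≤ g v := fun h => hv ((hmemA v).mpr h)
          simp [hg'def, hv]; exact hg v
      have hdecomp : ∀ v, g v = g' v + (if v ∈ A then (1:ℤ) else 0) := by
        intro v; simp [hg'def]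
      have hsum' : ∑ v, g' v = ∑ v, g v - A.card := by
        simp only [hg'def, Finset.sum_sub_distrib]
        rw [Finset.sum_ite_mem, Finset.univ_inter, Finset.sum_const]
        simp
      have hv0A : v0 ∈ A := (hmemA v0).mpr (by have := hg v0; omega)
      have hcard : 1 ≤ A.card := Finset.card_pos.mpr ⟨v0, hv0A⟩
      have hg'sum_nonneg : 0 ≤ ∑ v, g' v := Finset.sum_nonneg fun v _ => hg' v
      have hgsum_nonneg : 0 ≤ ∑ v, g v := Finset.sum_nonneg fun v _ => hg v
      have hlt : (∑ v, g' v).toNat < n := by omega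
      have step : G.LinEq (G.fire A X) (fun v => (G.fire A X) v - G.Lap g' v) :=
        ih _ hlt g' hg' rfl (G.fire A X)
      have heq : (fun v => X v - G.Lap g v) = (fun v => (G.fire A X) v - G.Lap g' v) := by
        funext v
        rw [G.fire_eq_sub_lap A X]
        have : G.Lap g v = G.Lap g' v + G.Lap (fun u => if u ∈ A then (1:ℤ) else 0) v := by
          rw [← G.lap_add]
          congr 1
          funext u
          exact hdecomp u
        rw [this]; ring
      rw [heq]
      exact Relation.ReflTransGen.head ⟨A, rfl⟩ step

lemma linEq_of_nonneg_potential (G : Multigraph V) (g : V → ℤ) (hg : ∀ v, 0 ≤ g v)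
    (X : V → ℤ) : G.LinEq X (fun v => X v - G.Lap g v) :=
  G.linEq_sub_lap _ g hg rfl X

lemma linEq_exists_potential (G : Multigraph V) {X Y : V → ℤ} (h : G.LinEq X Y) :
    ∃ f : V → ℤ, ∀ v, Y v = X v - G.Lap f v := by
  induction h with
  | refl => exact ⟨0, fun v => by simp [Lap]⟩
  | tail hxy hstep ih =>
    obtain ⟨f, hf⟩ := ih
    obtain ⟨A, hA⟩ := hstep
    refine ⟨fun u => f u + (if u ∈ A then 1 else 0), fun v => ?_⟩
    rw [hA, G.fire_eq_sub_lap]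
    simp only [G.lap_add, hf]
    ring

end Multigraph
end Aux2
section Aux3
namespace Multigraph
open Finset

variable {V : Type} [Fintype V] [DecidableEq V]

lemma exists_crossing (G : Multigraph V) (E : Finset V)
    (hconn : (SimpleGraph.induce (E : Set V) G.simple).Connected)
    (P : V → Prop) {v w : V} (hv : v ∈ E) (hw : w ∈ E) (hPv : P v) (hPw : ¬ P w) :
    ∃ a ∈ E, ∃ b ∈ E, 0 < G.mul a b ∧ P a ∧ ¬ P b := by
  classical
  obtain ⟨p⟩ := hconn.preconnected ⟨v, by exact_mod_cast hv⟩ ⟨w, by exact_mod_cast hw⟩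
  suffices H : ∀ (x y : (E : Set V)) (_ : (SimpleGraph.induce (E : Set V) G.simple).Walk x y),
      P x.1 → ¬ P y.1 → ∃ a ∈ E, ∃ b ∈ E, 0 < G.mul a b ∧ P a ∧ ¬ P b by
    exact H _ _ p hPv hPw
  intro x y p
  induction p with
  | nil => intro h1 h2; exact absurd h1 h2
  | @cons x m y hadj q ih =>
    intro h1 h2
    by_cases hm : P m.1
    · exact ih hm h2
    · have hadj' : G.simple.Adj x.1 m.1 := by simpa using hadj
      exact ⟨x.1, by exact_mod_cast x.2, m.1, by exact_mod_cast m.2, hadj', h1, hm⟩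

end Multigraph
end Aux3
section Aux4
namespace Multigraph
open Finset

variable {V : Type} [Fintype V] [DecidableEq V]

lemma case2 (G : Multigraph V) (S : Finset (Finset V))
    (hS : IsScramble G S) (D : V → ℤ) (hEff : Effective D) (hRank : PositiveRank G D)
    (hMax : ∀ D' : V → ℤ, LinEq G D D' → Effective D' →
      (S.filter fun E => ∃ v ∈ E, 0 < D' v).card ≤
        (S.filter fun E => ∃ v ∈ E, 0 < D v).card)
    (E : Finset V) (hE : E ∈ S) (hmiss : ∀ v ∈ E, ¬ 0 < D v) :
    ∃ A : Finset V, (∃ E' ∈ S, E' ⊆ A) ∧ (∃ E'' ∈ S, E'' ⊆ Aᶜ) ∧ (G.cut A : ℤ) ≤ deg D := by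
  classical
  obtain ⟨hEne, hEconn⟩ := hS E hE
  obtain ⟨q, hq⟩ := hEne
  obtain ⟨D', hlin, hD'eff, hD'q⟩ := hRank q
  obtain ⟨f₀, hf₀⟩ := G.linEq_exists_potential hlin
  haveI : Nonempty V := ⟨q⟩
  set m := Finset.univ.inf' Finset.univ_nonempty f₀ with hm
  set f : V → ℤ := fun v => f₀ v - m with hf_def
  have hf0 : ∀ v, 0 ≤ f v := fun v =>
    sub_nonneg.mpr (Finset.inf'_le _ (Finset.mem_univ v))
  have hlapf : ∀ v, G.Lap f v = G.Lap f₀ v := by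
    intro v; simp only [Lap, hf_def]
    exact Finset.sum_congr rfl fun u _ => by ring
  have hD' : ∀ v, D' v = D v - G.Lap f v := fun v => by rw [hlapf]; exact hf₀ v
  set g : ℕ → V → ℤ := fun c u => max (f u - (c:ℤ)) 0 with hg_def
  set Dc : ℕ → V → ℤ := fun c v => D v - G.Lap (g c) v with hDc_def
  have hgnn : ∀ c u, 0 ≤ g c u := fun c u => le_max_right _ _
  -- effectiveness of each Dc
  have hDceff : ∀ (c : ℕ) v, 0 ≤ Dc c v := by
    intro c v
    rcases le_or_gt (f v) (c:ℤ) with hvc | hvc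
    · have hgv : g c v = 0 := max_eq_right (by omega)
      have hlap : G.Lap (g c) v ≤ 0 := by
        apply Finset.sum_nonpos
        intro u _
        rw [hgv]
        apply mul_nonpos_of_nonneg_of_nonpos
        · positivity
        · have := hgnn c u; omega
      have := hEff v
      simp only [hDc_def]
      omega
    · have hgv : g c v = f v - c := max_eq_left (by omega)
      have hlap : G.Lap (g c) v ≤ G.Lap f v := by
        apply Finset.sum_le_sum
        intro u _
        apply mul_le_mul_of_nonneg_left _ (by positivity)
        have h1 : f u - c ≤ g c u := le_max_left _ _
        omega
      have h2 : 0 ≤ D v - G.Lap f v := by rw [← hD']; exact hD'eff v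
      simp only [hDc_def]
      omega
  have hlin_c : ∀ c, G.LinEq D (Dc c) :=
    fun c => G.linEq_of_nonneg_potential (g c) (hgnn c) D
  -- the predicate
  set P : ℕ → Prop := fun c => ∃ v ∈ E, 0 < Dc c v with hP_def
  have hD0 : ∀ v, Dc 0 v = D' v := by
    intro v
    have : g 0 = f := by
      funext u
      simp only [hg_def, Nat.cast_zero, sub_zero]
      exact max_eq_left (hf0 u)
    simp only [hDc_def, this, hD']
  have hP0 : P 0 := ⟨q, hq, by rw [hD0]; omega⟩
  set c₀ : ℕ := Finset.univ.sup fun v => (f v).toNat with hc₀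
  have hgc₀ : g c₀ = fun _ => 0 := by
    funext u
    have h1 : f u ≤ ((f u).toNat : ℤ) := Int.self_le_toNat _
    have h2 : (f u).toNat ≤ c₀ := Finset.le_sup (f := fun v => (f v).toNat) (Finset.mem_univ u)
    apply max_eq_right
    have : ((f u).toNat : ℤ) ≤ (c₀ : ℤ) := by exact_mod_cast h2
    omega
  have hnPc₀ : ¬ P c₀ := by
    rintro ⟨v, hvE, hpos⟩
    apply hmiss v hvE
    have : Dc c₀ v = D v := by simp [hDc_def, hgc₀, Lap]
    rwa [this] at hpos
  have hex : ∃ c, ¬ P c := ⟨c₀, hnPc₀⟩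
  set n := Nat.find hex with hn
  have hn1 : 1 ≤ n := by
    rcases Nat.eq_zero_or_pos n with h | h
    · exact absurd hP0 (h ▸ Nat.find_spec hex)
    · exact h
  set cb := n - 1 with hcb
  have hPc : P cb := by
    have := Nat.find_min hex (show cb < n by omega)
    exact not_not.mp this
  have hnP1 : ¬ P (cb + 1) := by
    have : cb + 1 = n := by omega
    rw [this]
    exact Nat.find_spec hex
  have hEzero : ∀ v ∈ E, Dc (cb+1) v = 0 := by
    intro v hv
    have h1 : ¬ 0 < Dc (cb+1) v := fun h => hnP1 ⟨v, hv, h⟩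
    have h2 := hDceff (cb+1) v
    omega
  -- the cut set
  set A : Finset V := Finset.univ.filter (fun u => (cb:ℤ)+1 ≤ f u) with hA
  have hmemA : ∀ u, u ∈ A ↔ (cb:ℤ)+1 ≤ f u := by
    intro u; simp [hA]
  have hmemAc : ∀ u, u ∈ Aᶜ ↔ ¬ ((cb:ℤ)+1 ≤ f u) := by
    intro u; simp [hA]
  -- step identity
  have hgdec : g cb = fun u => g (cb+1) u + (if u ∈ A then (1:ℤ) else 0) := by
    funext u
    by_cases hu : u ∈ A
    · have h1 : (cb:ℤ)+1 ≤ f u := (hmemA u).mp hu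
      simp only [hg_def, hu, if_true]
      push_cast
      rw [max_eq_left (by omega), max_eq_left (by omega)]
      ring
    · have h1 : ¬ ((cb:ℤ)+1 ≤ f u) := fun h => hu ((hmemA u).mpr h)
      simp only [hg_def, hu, if_false]
      push_cast
      rw [max_eq_right (by omega), max_eq_right (by omega)]
      ring
  have hstep : ∀ v, Dc cb v = Dc (cb+1) v - G.Lap (fun u => if u ∈ A then (1:ℤ) else 0) v := by
    intro v
    have : G.Lap (g cb) v = G.Lap (g (cb+1)) v + G.Lap (fun u => if u ∈ A then (1:ℤ) else 0) v := by
      rw [hgdec, G.lap_add]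
    simp only [hDc_def, this]
    ring
  -- vertices of E in A have no edges to the complement of A
  have hkey_high : ∀ v ∈ E, v ∈ A → ∀ u, u ∈ Aᶜ → G.mul v u = 0 := by
    intro v hvE hvA u hu
    have h1 := hstep v
    rw [G.lap_ind_mem A hvA, hEzero v hvE] at h1
    have h2 := hDceff cb v
    have h3 : ∑ u ∈ Aᶜ, (G.mul v u : ℤ) ≤ 0 := by omega
    have h4 : ∀ x ∈ Aᶜ, (0:ℤ) ≤ (G.mul v x : ℤ) := fun x _ => by positivity
    have h5 := (Finset.sum_eq_zero_iff_of_nonneg h4).mp (le_antisymm h3 (Finset.sum_nonneg h4)) u hu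
    exact_mod_cast h5
  -- a vertex of E outside A
  obtain ⟨w, hwE, hwpos⟩ := hPc
  have hwA : w ∉ A := by
    intro hwA
    have h1 := hstep w
    rw [G.lap_ind_mem A hwA, hEzero w hwE] at h1
    have h4 : (0:ℤ) ≤ ∑ u ∈ Aᶜ, (G.mul w u : ℤ) :=
      Finset.sum_nonneg fun x _ => by positivity
    omega
  -- E is contained in the complement of A
  have hEsub : E ⊆ Aᶜ := by
    intro v hvE
    by_contra hv
    have hvA : v ∈ A := by
      by_contra hvA
      exact hv (Finset.mem_compl.mpr hvA)
    obtain ⟨a, haE, b, hbE, hab, haA, hbA⟩ :=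
      G.exists_crossing E hEconn (· ∈ A) hvE hwE hvA hwA
    have := hkey_high a haE haA b (Finset.mem_compl.mpr hbA)
    omega
  -- the egg E' inside A
  set hitD := S.filter (fun E0 => ∃ x ∈ E0, 0 < D x) with hhitD
  set hitDc := S.filter (fun E0 => ∃ x ∈ E0, 0 < Dc cb x) with hhitDc
  have hcard : hitDc.card ≤ hitD.card := hMax (Dc cb) (hlin_c cb) (hDceff cb)
  have hEmemDc : E ∈ hitDc := Finset.mem_filter.mpr ⟨hE, ⟨w, hwE, hwpos⟩⟩
  have hEnotD : E ∉ hitD := by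
    intro h
    obtain ⟨-, x, hx, hxpos⟩ := Finset.mem_filter.mp h
    exact hmiss x hx hxpos
  have hnotsub : ¬ hitD ⊆ hitDc := by
    intro hsub
    have h1 : insert E hitD ⊆ hitDc := Finset.insert_subset hEmemDc hsub
    have h2 := Finset.card_le_card h1
    rw [Finset.card_insert_of_notMem hEnotD] at h2
    omega
  obtain ⟨E', hE'D, hE'nDc⟩ := Finset.not_subset.mp hnotsub
  obtain ⟨hE'S, z, hzE', hzpos⟩ := Finset.mem_filter.mp hE'D
  have hE'zero : ∀ v ∈ E', Dc cb v = 0 := by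
    intro v hv
    have h1 : ¬ (0 < Dc cb v) := fun h => hE'nDc (Finset.mem_filter.mpr ⟨hE'S, ⟨v, hv, h⟩⟩)
    have h2 := hDceff cb v
    omega
  have hlow : ∀ v ∈ E', v ∉ A → (¬ 0 < D v) ∧ ∀ u, u ∈ A → G.mul v u = 0 := by
    intro v hvE' hvA
    have hfv : ¬ ((cb:ℤ)+1 ≤ f v) := fun h => hvA ((hmemA v).mpr h)
    have hgv : g cb v = 0 := max_eq_right (by omega)
    have hlapv : G.Lap (g cb) v = - ∑ u, (G.mul v u : ℤ) * g cb u := by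
      rw [← Finset.sum_neg_distrib]
      apply Finset.sum_congr rfl
      intro u _
      rw [hgv]; ring
    have h0 : Dc cb v = 0 := hE'zero v hvE'
    have h1 : D v + ∑ u, (G.mul v u : ℤ) * g cb u = 0 := by
      have := h0
      simp only [hDc_def, hlapv] at this
      omega
    have hsnn : 0 ≤ ∑ u, (G.mul v u : ℤ) * g cb u :=
      Finset.sum_nonneg fun u _ => mul_nonneg (by positivity) (hgnn cb u)
    have hDv : D v = 0 := by have := hEff v; omega
    constructor
    · omega
    · intro u huA
      have hnn : ∀ x ∈ Finset.univ, (0:ℤ) ≤ (G.mul v x : ℤ) * g cb x :=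
        fun x _ => mul_nonneg (by positivity) (hgnn cb x)
      have hsum0 : ∑ x, (G.mul v x : ℤ) * g cb x = 0 := by omega
      have hterm := (Finset.sum_eq_zero_iff_of_nonneg hnn).mp hsum0 u (Finset.mem_univ u)
      have hfu : (cb:ℤ)+1 ≤ f u := (hmemA u).mp huA
      have hgu : 0 < g cb u := by
        have : g cb u = f u - cb := max_eq_left (by omega)
        omega
      rcases mul_eq_zero.mp hterm with h | h
      · exact_mod_cast h
      · omega
  have hzA : z ∈ A := by
    by_contra hzA
    exact (hlow z hzE' hzA).1 hzpos
  have hE'conn := (hS E' hE'S).2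
  have hE'sub : E' ⊆ A := by
    intro v hvE'
    by_contra hvA
    obtain ⟨a, haE', b, hbE', hab, haA, hbA⟩ :=
      G.exists_crossing E' hE'conn (· ∉ A) hvE' hzE' hvA (not_not.mpr hzA)
    have := (hlow a haE' haA).2 b (not_not.mp hbA)
    omega
  -- the cut bound
  have hcutv : ∀ v ∈ A, (∑ u ∈ Aᶜ, (G.mul v u : ℤ)) ≤ Dc (cb+1) v := by
    intro v hvA
    have h1 := hstep v
    rw [G.lap_ind_mem A hvA] at h1
    have h2 := hDceff cb v
    omega
  have hdegc : ∑ v, Dc (cb+1) v = deg D := by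
    simp only [hDc_def, deg, Finset.sum_sub_distrib, G.sum_lap, sub_zero]
  have hcut : (G.cut A : ℤ) ≤ deg D := by
    have h1 : (G.cut A : ℤ) = ∑ v ∈ A, ∑ u ∈ Aᶜ, (G.mul v u : ℤ) := by
      simp [cut]
    rw [h1]
    calc ∑ v ∈ A, ∑ u ∈ Aᶜ, (G.mul v u : ℤ)
        ≤ ∑ v ∈ A, Dc (cb+1) v := Finset.sum_le_sum hcutv
      _ ≤ ∑ v, Dc (cb+1) v := Finset.sum_le_sum_of_subset_of_nonneg
          (Finset.subset_univ A) (fun v _ _ => hDceff (cb+1) v)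
      _ = deg D := hdegc
  exact ⟨A, ⟨E', hE'S, hE'sub⟩, ⟨E, hE, hEsub⟩, hcut⟩

end Multigraph
end Aux4
open Multigraph in
/-- Let `S` be a scramble in a connected multigraph `G` and `D` an effective
divisor of positive rank whose support meets the maximum number of eggs of `S`
among all equivalent effective divisors.  Then (whether or not the support of
`D` meets every egg) `deg D ≥ ‖S‖`. -/
theorem deg_ge_scrambleOrder {V : Type} [Fintype V] [DecidableEq V]
    (G : Multigraph V) (hG : G.Connected) (S : Finset (Finset V))
    (hS : IsScramble G S) (D : V → ℤ)
    (hEff : Effective D) (hRank : PositiveRank G D)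
    (hMax : ∀ D' : V → ℤ, LinEq G D D' → Effective D' →
      (S.filter fun E => ∃ v ∈ E, 0 < D' v).card ≤
        (S.filter fun E => ∃ v ∈ E, 0 < D v).card) :
    (scrambleOrder G S : ℤ) ≤ deg D := by
  classical
  have hdeg0 : 0 ≤ deg D := Finset.sum_nonneg fun v _ => hEff v
  have key : ∀ k : ℕ, ValidOrder G S k → (k : ℤ) ≤ deg D := by
    intro k hk
    by_cases hall : ∀ E ∈ S, ∃ v ∈ E, 0 < D v
    · -- the support of D is a hitting set
      set C : Finset V := Finset.univ.filter (fun v => 0 < D v) with hC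
      have hhit : IsHitting S C := by
        intro E hE
        obtain ⟨v, hvE, hvpos⟩ := hall E hE
        exact ⟨v, Finset.mem_inter.mpr ⟨hvE, by simp [hC, hvpos]⟩⟩
      have h1 : k ≤ C.card := hk.1 C hhit
      have h2 : (C.card : ℤ) ≤ deg D := by
        have h3 : (C.card : ℤ) = ∑ v ∈ C, (1:ℤ) := by simp
        rw [h3]
        calc ∑ v ∈ C, (1:ℤ) ≤ ∑ v ∈ C, D v := by
              apply Finset.sum_le_sum
              intro v hv
              have : 0 < D v := by simp [hC] at hv; exact hv
              omega
          _ ≤ ∑ v, D v := Finset.sum_le_sum_of_subset_of_nonneg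
              (Finset.subset_univ C) (fun v _ _ => hEff v)
      have : (k : ℤ) ≤ (C.card : ℤ) := by exact_mod_cast h1
      omega
    · push_neg at hall
      obtain ⟨E, hE, hmiss⟩ := hall
      have hmiss' : ∀ v ∈ E, ¬ 0 < D v := fun v hv => not_lt.mpr (hmiss v hv)
      obtain ⟨A, hEgg1, hEgg2, hcut⟩ :=
        G.case2 S hS D hEff hRank hMax E hE hmiss'
      have h1 : k ≤ G.cut A := hk.2 A hEgg1 hEgg2
      have : (k : ℤ) ≤ (G.cut A : ℤ) := by exact_mod_cast h1
      omega
  have hbdd : scrambleOrder G S ≤ (deg D).toNat := by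
    apply csSup_le
    · exact ⟨0, fun C _ => Nat.zero_le _, fun A _ _ => Nat.zero_le _⟩
    · intro k hk
      have := key k hk
      omega
  have : ((deg D).toNat : ℤ) = deg D := Int.toNat_of_nonneg hdeg0
  omega
end
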